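/- Reachability games are positionally determined: for any (possibly infinite) game graph G with target set R for player i, there exist a positional winning strategy for player i with support W_i and a positional winning strategy for player 1−i with support V \ W_i, where W_i is the support of a maximal i-strategy. -/
import Mathlib


/-- A (finite or infinite) path in the graph with edge relation `E`:
`f k = some u` means the `k`-th position is `u`; once `none`, always `none`. -/
structure Play (V : Type) (E : V → V → Prop) where
  f : ℕ → Option V
  first : (f 0).isSome
  closed : ∀ k, f k = none → f (k + 1) = none
  step : ∀ k u v, f k = some u → f (k + 1) = some v → E u v

/-- A play is maximal if it is infinite or ends in a sink. -/
def Play.IsMax {V : Type} {E : V → V → Prop} (α : Play V E) : Prop :=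
  (∀ k, α.f k ≠ none) ∨
    ∃ n u, α.f n = some u ∧ α.f (n + 1) = none ∧ ∀ w, ¬ E u w

/-- A positional strategy for the player owning the vertices `Vi`,
with support `W`: a partial map only defined on `W ∩ Vi`, suggesting
legal moves staying in `W`. -/
structure PStrategy {V : Type} (E : V → V → Prop) (Vi : Set V) where
  W : Set V
  σ : V → Option V
  dom : ∀ w v, σ w = some v → w ∈ W ∧ w ∈ Vi ∧ E w v ∧ v ∈ W

/-- A play follows a positional strategy if, whenever the strategy is defined
at the current position and the play continues, the next position is the
strategy's suggestion. -/
def Play.Follows {V : Type} {E : V → V → Prop} {Vi : Set V} (α : Play V E)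
    (s : PStrategy E Vi) : Prop :=
  ∀ k u v, α.f k = some u → s.σ u = some v → α.f (k + 1) ≠ none → α.f (k + 1) = some v

/-- `s` is a winning strategy (an `i`-strategy) w.r.t. the set of games `C`
and the winning condition `Ci ⊆ C`: every game starting in the support and
following `s` is won. -/
def PStrategy.Winning {V : Type} {E : V → V → Prop} {Vi : Set V}
    (C Ci : Set (Play V E)) (s : PStrategy E Vi) : Prop :=
  ∀ α ∈ C, (∃ u, α.f 0 = some u ∧ u ∈ s.W) → α.Follows s → α ∈ Ci

/-- Order on strategies: larger support and larger graph of the partial map. -/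
def PStrategy.le {V : Type} {E : V → V → Prop} {Vi : Set V}
    (s t : PStrategy E Vi) : Prop :=
  s.W ⊆ t.W ∧ ∀ w v, s.σ w = some v → t.σ w = some v

/-- A maximal winning strategy. -/
def PStrategy.MaxWinning {V : Type} {E : V → V → Prop} {Vi : Set V}
    (C Ci : Set (Play V E)) (s : PStrategy E Vi) : Prop :=
  s.Winning C Ci ∧ ∀ t : PStrategy E Vi, t.Winning C Ci → s.le t → t.le s

/-- Games won by the reaching player `i`: finite paths in `(V∖R)*R`. -/
def ReachWin {V : Type} (E : V → V → Prop) (R : Set V) : Set (Play V E) :=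
  {α | ∃ n u, α.f n = some u ∧ u ∈ R ∧ α.f (n + 1) = none ∧
    ∀ k, k < n → ∀ w, α.f k = some w → w ∉ R}

/-- Games won by the opponent `1 - i`: maximal paths avoiding `R`. -/
def ReachLose {V : Type} (E : V → V → Prop) (R : Set V) : Set (Play V E) :=
  {α | α.IsMax ∧ ∀ k w, α.f k = some w → w ∉ R}

noncomputable section
namespace ReachAux
open scoped Classical
variable {V : Type}

def stage (E : V → V → Prop) (Vi Vopp R : Set V) : Ordinal.{0} → Set V := fun α =>
  {u | u ∈ R ∨
    (u ∈ Vi ∧ ∃ β, ∃ _ : β < α, ∃ v, E u v ∧ v ∈ stage E Vi Vopp R β) ∨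
    (u ∈ Vopp ∧ (∃ v, E u v) ∧ ∀ v, E u v → ∃ β, ∃ _ : β < α, v ∈ stage E Vi Vopp R β)}
termination_by α => α

variable {E : V → V → Prop} {Vi Vopp R : Set V}

lemma mem_stage_iff {α : Ordinal.{0}} {u : V} :
    u ∈ stage E Vi Vopp R α ↔ (u ∈ R ∨
    (u ∈ Vi ∧ ∃ β, ∃ _ : β < α, ∃ v, E u v ∧ v ∈ stage E Vi Vopp R β) ∨
    (u ∈ Vopp ∧ (∃ v, E u v) ∧ ∀ v, E u v → ∃ β, ∃ _ : β < α, v ∈ stage E Vi Vopp R β)) := by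
  rw [stage]; rfl

def Attr (E : V → V → Prop) (Vi Vopp R : Set V) : Set V :=
  {u | ∃ α : Ordinal.{0}, u ∈ stage E Vi Vopp R α}

def rank (E : V → V → Prop) (Vi Vopp R : Set V) (u : V) : Ordinal.{0} :=
  sInf {α : Ordinal.{0} | u ∈ stage E Vi Vopp R α}

lemma mem_stage_rank {u : V} (h : u ∈ Attr E Vi Vopp R) :
    u ∈ stage E Vi Vopp R (rank E Vi Vopp R u) :=
  csInf_mem (s := {α : Ordinal.{0} | u ∈ stage E Vi Vopp R α}) h

lemma rank_le {u : V} {α : Ordinal.{0}} (h : u ∈ stage E Vi Vopp R α) :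
    rank E Vi Vopp R u ≤ α := csInf_le' h

lemma attr_of_stage {u : V} {α : Ordinal.{0}} (h : u ∈ stage E Vi Vopp R α) :
    u ∈ Attr E Vi Vopp R := ⟨α, h⟩

lemma R_subset_attr : R ⊆ Attr E Vi Vopp R := fun u hu =>
  ⟨0, mem_stage_iff.2 (Or.inl hu)⟩

lemma vi_step (hdisj : Vi ∩ Vopp = ∅) {u : V} (hu : u ∈ Attr E Vi Vopp R)
    (hR : u ∉ R) (hVi : u ∈ Vi) :
    ∃ v, E u v ∧ v ∈ Attr E Vi Vopp R ∧ rank E Vi Vopp R v < rank E Vi Vopp R u := by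
  rcases mem_stage_iff.1 (mem_stage_rank hu) with h | ⟨_, β, hβ, v, he, hv⟩ | ⟨hVopp, _⟩
  · exact absurd h hR
  · exact ⟨v, he, attr_of_stage hv, lt_of_le_of_lt (rank_le hv) hβ⟩
  · exact absurd (Set.mem_inter hVi hVopp) (by simp [hdisj])

lemma vopp_step (hdisj : Vi ∩ Vopp = ∅) {u : V} (hu : u ∈ Attr E Vi Vopp R)
    (hR : u ∉ R) (hVopp : u ∈ Vopp) :
    (∃ v, E u v) ∧ ∀ v, E u v → v ∈ Attr E Vi Vopp R ∧ rank E Vi Vopp R v < rank E Vi Vopp R u := by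
  rcases mem_stage_iff.1 (mem_stage_rank hu) with h | ⟨hVi, _⟩ | ⟨_, hne, hall⟩
  · exact absurd h hR
  · exact absurd (Set.mem_inter hVi hVopp) (by simp [hdisj])
  · refine ⟨hne, fun v hv => ?_⟩
    obtain ⟨β, hβ, hvβ⟩ := hall v hv
    exact ⟨attr_of_stage hvβ, lt_of_le_of_lt (rank_le hvβ) hβ⟩

lemma vi_escape {u v : V} (hVi : u ∈ Vi) (hu : u ∉ Attr E Vi Vopp R) (he : E u v) :
    v ∉ Attr E Vi Vopp R := by
  rintro ⟨α, hv⟩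
  exact hu ⟨α + 1, mem_stage_iff.2 (Or.inr (Or.inl ⟨hVi, α, lt_add_one α, v, he, hv⟩))⟩

lemma vopp_escape {u : V} (hVopp : u ∈ Vopp) (hu : u ∉ Attr E Vi Vopp R)
    (hne : ∃ v, E u v) : ∃ v, E u v ∧ v ∉ Attr E Vi Vopp R := by
  by_contra hc
  push_neg at hc
  set α : Ordinal.{0} := (⨆ v : {v // E u v}, rank E Vi Vopp R v.1) + 1 with hα
  refine hu ⟨α, mem_stage_iff.2 (Or.inr (Or.inr ⟨hVopp, hne, fun v hv => ?_⟩))⟩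
  refine ⟨rank E Vi Vopp R v, ?_, mem_stage_rank (hc v hv)⟩
  calc rank E Vi Vopp R v ≤ ⨆ w : {w // E u w}, rank E Vi Vopp R w.1 :=
        le_ciSup (Ordinal.bddAbove_range _) (⟨v, hv⟩ : {w // E u w})
    _ < α := lt_add_one _

lemma Play.none_mono (α : Play V E) {m n : ℕ} (h : α.f m = none) (hmn : m ≤ n) :
    α.f n = none := by
  induction n with
  | zero => exact (Nat.le_zero.1 hmn) ▸ h
  | succ n ih =>
    rcases Nat.lt_or_ge m (n+1) with h1 | h1
    · exact α.closed n (ih (Nat.lt_succ_iff.1 h1))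
    · exact (Nat.le_antisymm hmn h1) ▸ h

lemma sink_of_max (α : Play V E) (hmax : α.IsMax) {k : ℕ} {u : V}
    (hk : α.f k = some u) (hk1 : α.f (k + 1) = none) : ∀ w, ¬ E u w := by
  rcases hmax with h | ⟨n, u', hn, hn1, hs⟩
  · exact absurd hk1 (h (k+1))
  · have hnk : n = k := by
      rcases Nat.lt_or_ge n k with h1 | h1
      · exact absurd (Play.none_mono α hn1 h1) (by simp [hk])
      · rcases Nat.lt_or_ge k n with h2 | h2
        · exact absurd (Play.none_mono α hk1 h2) (by simp [hn])
        · omega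
    subst hnk
    rw [hk] at hn
    cases hn
    exact hs

/-- the strategy map for player i -/
def sSig (E : V → V → Prop) (Vi Vopp R : Set V) (u : V) : Option V :=
  if h : u ∈ Vi ∧ u ∈ Attr E Vi Vopp R ∧
      ∃ v, E u v ∧ v ∈ Attr E Vi Vopp R ∧
        (u ∉ R → rank E Vi Vopp R v < rank E Vi Vopp R u)
  then some h.2.2.choose else none

lemma sSig_spec {u v : V} (h : sSig E Vi Vopp R u = some v) :
    u ∈ Vi ∧ u ∈ Attr E Vi Vopp R ∧ E u v ∧ v ∈ Attr E Vi Vopp R ∧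
      (u ∉ R → rank E Vi Vopp R v < rank E Vi Vopp R u) := by
  unfold sSig at h
  split at h
  · rename_i hc
    cases h
    exact ⟨hc.1, hc.2.1, hc.2.2.choose_spec⟩
  · cases h

lemma sSig_some (hdisj : Vi ∩ Vopp = ∅) {u : V} (hVi : u ∈ Vi)
    (hu : u ∈ Attr E Vi Vopp R)
    (hex : ∃ v, E u v ∧ v ∈ Attr E Vi Vopp R) :
    ∃ v, sSig E Vi Vopp R u = some v := by
  by_cases hR : u ∈ R
  · obtain ⟨v, hv1, hv2⟩ := hex
    rw [sSig, dif_pos ⟨hVi, hu, v, hv1, hv2, fun h => absurd hR h⟩]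
    exact ⟨_, rfl⟩
  · obtain ⟨v, hv1, hv2, hv3⟩ := vi_step hdisj hu hR hVi
    rw [sSig, dif_pos ⟨hVi, hu, v, hv1, hv2, fun _ => hv3⟩]
    exact ⟨_, rfl⟩

/-- the strategy map for the opponent -/
def tSig (E : V → V → Prop) (Vi Vopp R : Set V) (u : V) : Option V :=
  if h : u ∈ Vopp ∧ u ∉ Attr E Vi Vopp R ∧ ∃ v, E u v ∧ v ∉ Attr E Vi Vopp R
  then some h.2.2.choose else none

lemma tSig_spec {u v : V} (h : tSig E Vi Vopp R u = some v) :
    u ∈ Vopp ∧ u ∉ Attr E Vi Vopp R ∧ E u v ∧ v ∉ Attr E Vi Vopp R := by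
  unfold tSig at h
  split at h
  · rename_i hc
    cases h
    exact ⟨hc.1, hc.2.1, hc.2.2.choose_spec⟩
  · cases h

open scoped Classical
variable {V : Type} {E : V → V → Prop} {Vi Vopp R : Set V}

/-- one-step escape map used for the counter-play against a purported winning strategy -/
def nextO (E : V → V → Prop) (Vi Vopp R : Set V) (σ' : V → Option V) (u : V) : Option V :=
  if u ∈ Vi then
    match σ' u with
    | some v => some v
    | none => if h : ∃ v, E u v then some h.choose else none
  else if h : ∃ v, E u v ∧ v ∉ Attr E Vi Vopp R then some h.choose else none

variable {σ' : V → Option V}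

lemma nextO_edge (hdom : ∀ w v, σ' w = some v → E w v) {u v : V}
    (h : nextO E Vi Vopp R σ' u = some v) : E u v := by
  unfold nextO at h
  split at h
  · rcases hσ : σ' u with _ | w
    · rw [hσ] at h
      simp only at h
      split at h
      · rename_i hc; cases h; exact hc.choose_spec
      · cases h
    · rw [hσ] at h
      simp only at h
      cases h
      exact hdom _ _ hσ
  · split at h
    · rename_i hc; cases h; exact hc.choose_spec.1
    · cases h

lemma nextO_keep (hdom : ∀ w v, σ' w = some v → E w v) {u v : V}
    (hu : u ∉ Attr E Vi Vopp R)
    (h : nextO E Vi Vopp R σ' u = some v) : v ∉ Attr E Vi Vopp R := by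
  by_cases hVi : u ∈ Vi
  · exact vi_escape hVi hu (nextO_edge hdom h)
  · unfold nextO at h
    rw [if_neg hVi] at h
    split at h
    · rename_i hc; cases h; exact hc.choose_spec.2
    · cases h

lemma nextO_none_sink (hcov : ∀ v, v ∈ Vi ∨ v ∈ Vopp) {u : V}
    (hu : u ∉ Attr E Vi Vopp R)
    (h : nextO E Vi Vopp R σ' u = none) : ∀ w, ¬ E u w := by
  intro w hw
  unfold nextO at h
  split at h
  · rcases hσ : σ' u with _ | x
    · rw [hσ] at h
      simp only at h
      split at h
      · cases h
      · rename_i hc; exact hc ⟨w, hw⟩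
    · rw [hσ] at h; simp at h
  · rename_i hVi
    have hVopp := (hcov u).resolve_left hVi
    obtain ⟨v, hv1, hv2⟩ := vopp_escape hVopp hu ⟨w, hw⟩
    split at h
    · cases h
    · rename_i hc; exact hc ⟨v, hv1, hv2⟩

lemma nextO_follow {u v : V} (hdom : ∀ w v, σ' w = some v → w ∈ Vi)
    (h : σ' u = some v) : nextO E Vi Vopp R σ' u = some v := by
  unfold nextO
  rw [if_pos (hdom _ _ h), h]

/-- escape play -/
def esc (E : V → V → Prop) (Vi Vopp R : Set V) (σ' : V → Option V) (u₀ : V) :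
    ℕ → Option V
  | 0 => some u₀
  | k + 1 => (esc E Vi Vopp R σ' u₀ k).bind (nextO E Vi Vopp R σ')

lemma tSig_some {u : V} (hVopp : u ∈ Vopp) (hu : u ∉ Attr E Vi Vopp R)
    (hex : ∃ v, E u v ∧ v ∉ Attr E Vi Vopp R) :
    ∃ v, tSig E Vi Vopp R u = some v := by
  rw [tSig, dif_pos ⟨hVopp, hu, hex⟩]
  exact ⟨_, rfl⟩

end ReachAux

open ReachAux in
/-- Reachability games are positionally determined: there is a maximal
`i`-strategy with support `W_i` and a winning strategy for the opponent
with support `V ∖ W_i`. -/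
theorem stmt2 {V : Type} {E : V → V → Prop} (Vi Vopp : Set V)
    (hcov : ∀ v, v ∈ Vi ∨ v ∈ Vopp) (hdisj : Vi ∩ Vopp = ∅) (R : Set V) :
    ∃ (s : PStrategy E Vi) (t : PStrategy E Vopp),
      s.MaxWinning (ReachWin E R ∪ ReachLose E R) (ReachWin E R) ∧
      t.Winning (ReachWin E R ∪ ReachLose E R) (ReachLose E R) ∧
      t.W = s.Wᶜ := by
  classical
  refine ⟨⟨Attr E Vi Vopp R, sSig E Vi Vopp R, ?_⟩,
          ⟨(Attr E Vi Vopp R)ᶜ, tSig E Vi Vopp R, ?_⟩, ?_, ?_, rfl⟩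
  · intro w v h
    have sp := sSig_spec h
    exact ⟨sp.2.1, sp.1, sp.2.2.1, sp.2.2.2.1⟩
  · intro w v h
    have sp := tSig_spec h
    exact ⟨sp.2.1, sp.1, sp.2.2.1, sp.2.2.2⟩
  · -- MaxWinning for player i
    constructor
    · -- winning
      rintro α hC ⟨u₀, h0, hW⟩ hF
      rcases hC with hwin | hlose
      · exact hwin
      exfalso
      obtain ⟨hmax, havoid⟩ := hlose
      have key : ∀ o : Ordinal.{0}, ∀ k u, α.f k = some u → u ∈ Attr E Vi Vopp R →
          rank E Vi Vopp R u = o → False := by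
        intro o
        induction o using Ordinal.induction with
        | h o IH =>
          intro k u hk hu hr
          have hR : u ∉ R := havoid k u hk
          cases hcase : α.f (k + 1) with
          | none =>
            have hsink := sink_of_max α hmax hk hcase
            rcases hcov u with hVi | hVopp
            · obtain ⟨v, hv, -, -⟩ := vi_step hdisj hu hR hVi
              exact hsink v hv
            · obtain ⟨⟨v, hv⟩, -⟩ := vopp_step hdisj hu hR hVopp
              exact hsink v hv
          | some w =>
            have hne : α.f (k + 1) ≠ none := by simp [hcase]
            rcases hcov u with hVi | hVopp
            · obtain ⟨v, hv1, hv2, hv3⟩ := vi_step hdisj hu hR hVi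
              obtain ⟨v', hσ⟩ := sSig_some hdisj hVi hu ⟨v, hv1, hv2⟩
              have h3 := hF k u v' hk hσ hne
              rw [hcase] at h3
              cases h3
              have sp := sSig_spec hσ
              exact IH _ (hr ▸ sp.2.2.2.2 hR) (k + 1) w hcase sp.2.2.2.1 rfl
            · have hstep := α.step k u w hk hcase
              obtain ⟨-, hall⟩ := vopp_step hdisj hu hR hVopp
              obtain ⟨hwA, hwr⟩ := hall w hstep
              exact IH _ (hr ▸ hwr) (k + 1) w hcase hwA rfl
      exact key _ 0 u₀ h0 hW rfl
    · -- maximality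
      rintro t' ht'win ⟨hle1, hle2⟩
      have hWsub : t'.W ⊆ Attr E Vi Vopp R := by
        intro u₀ hu₀W
        by_contra hu₀
        have hdomE : ∀ w v, t'.σ w = some v → E w v := fun w v h => (t'.dom w v h).2.2.1
        have hdomVi : ∀ w v, t'.σ w = some v → w ∈ Vi := fun w v h => (t'.dom w v h).2.1
        set g := esc E Vi Vopp R t'.σ u₀ with hg
        have h00 : g 0 = some u₀ := rfl
        have hsucc : ∀ k, g (k + 1) = (g k).bind (nextO E Vi Vopp R t'.σ) := fun k => rfl
        have hinv : ∀ k u, g k = some u → u ∉ Attr E Vi Vopp R := by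
          intro k
          induction k with
          | zero => intro u h; rw [h00] at h; cases h; exact hu₀
          | succ k ih =>
            intro w hw
            rw [hsucc] at hw
            cases hk : g k with
            | none => rw [hk] at hw; cases hw
            | some u =>
              rw [hk] at hw
              simp only [Option.bind_some] at hw
              exact nextO_keep hdomE (ih u hk) hw
        let P : Play V E := {
          f := g
          first := by rw [h00]; rfl
          closed := by intro k h; rw [hsucc, h]; rfl
          step := by
            intro k u v hk hk1
            rw [hsucc, hk] at hk1
            simp only [Option.bind_some] at hk1
            exact nextO_edge hdomE hk1 }
        have hmaxP : P.IsMax := by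
          by_cases hfin : ∀ k, g k ≠ none
          · exact Or.inl hfin
          · push_neg at hfin
            right
            obtain ⟨k, hk⟩ := hfin
            have hex : ∃ k, g k = none := ⟨k, hk⟩
            have hn := Nat.find_spec hex
            have hnpos : Nat.find hex ≠ 0 := by
              intro h; rw [h, h00] at hn; cases hn
            obtain ⟨m, hm'⟩ := Nat.exists_eq_succ_of_ne_zero hnpos
            have hm : g m ≠ none := Nat.find_min hex (by omega)
            cases hgm : g m with
            | none => exact absurd hgm hm
            | some u =>
              refine ⟨m, u, hgm, ?_, ?_⟩
              · show g (m + 1) = none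
                rw [show m + 1 = Nat.find hex by omega]; exact hn
              · have hn' : g (m + 1) = none := by
                  rw [show m + 1 = Nat.find hex by omega]; exact hn
                rw [hsucc, hgm] at hn'
                simp only [Option.bind_some] at hn'
                exact nextO_none_sink hcov (hinv m u hgm) hn'
        have hPC : P ∈ ReachWin E R ∪ ReachLose E R :=
          Or.inr ⟨hmaxP, fun k w hw hR => (hinv k w hw) (R_subset_attr hR)⟩
        have hPF : P.Follows t' := by
          intro k u v hk hσ hne
          show g (k + 1) = some v
          rw [hsucc, show g k = some u from hk]
          simp only [Option.bind_some]
          exact nextO_follow hdomVi hσ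
        obtain ⟨n, u, hn, hR, -, -⟩ := ht'win P hPC ⟨u₀, h00, hu₀W⟩ hPF
        exact (hinv n u hn) (R_subset_attr hR)
      refine ⟨hWsub, ?_⟩
      intro w v h
      have hd := t'.dom w v h
      have hwA := hWsub hd.1
      have hvA := hWsub hd.2.2.2
      obtain ⟨v', hσ⟩ := sSig_some hdisj hd.2.1 hwA ⟨v, hd.2.2.1, hvA⟩
      have h2 := hle2 w v' hσ
      rw [h] at h2
      cases h2
      exact hσ
  · -- winning for the opponent
    rintro α hC ⟨u₀, h0, hW⟩ hF
    rcases hC with hwin | hlose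
    · exfalso
      have hinv : ∀ k u, α.f k = some u → u ∉ Attr E Vi Vopp R := by
        intro k
        induction k with
        | zero => intro u h; rw [h0] at h; cases h; exact hW
        | succ k ih =>
          intro w hw
          have hkk : ∃ u, α.f k = some u := by
            cases hk : α.f k with
            | none => exact absurd (α.closed k hk) (by simp [hw])
            | some u => exact ⟨u, rfl⟩
          obtain ⟨u, hk⟩ := hkk
          have hu := ih u hk
          have hstep := α.step k u w hk hw
          rcases hcov u with hVi | hVopp
          · exact vi_escape hVi hu hstep
          · obtain ⟨x, hx1, hx2⟩ := vopp_escape hVopp hu ⟨w, hstep⟩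
            obtain ⟨v, hσ⟩ := tSig_some hVopp hu ⟨x, hx1, hx2⟩
            have hne : α.f (k + 1) ≠ none := by simp [hw]
            have h3 := hF k u v hk hσ hne
            rw [hw] at h3
            cases h3
            exact (tSig_spec hσ).2.2.2
      obtain ⟨n, u, hn, hR, -, -⟩ := hwin
      exact (hinv n u hn) (R_subset_attr hR)
    · exact hlose
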